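/- Let f : X → Y be a continuous open map. If A ⊆ X has a strongly countable neighborhood base, then f(A) has a strongly countable neighborhood base in Y. -/

import Mathlib

open Filter Topology

/-- `U` is a strongly countable neighborhood base at `A`: a decreasing-free countable
base of open neighborhoods of `A` such that every sequence choosing points from the
`U n` has a convergent subsequence. -/
def StronglyCountableNhdBase {X : Type*} [TopologicalSpace X] (A : Set X)
    (U : ℕ → Set X) : Prop :=
  (∀ n, IsOpen (U n) ∧ A ⊆ U n) ∧
  (∀ O : Set X, IsOpen O → A ⊆ O → ∃ n, U n ⊆ O) ∧
  (∀ u : ℕ → X, (∀ n, u n ∈ U n) →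
    ∃ φ : ℕ → ℕ, StrictMono φ ∧ ∃ p : X, Tendsto (u ∘ φ) atTop (𝓝 p))

/-- continuous open maps preserve the existence of a strongly countable
neighborhood base: if `A ⊆ X` has one, so does `f(A)` in `Y`. -/
theorem stmt_15 {X Y : Type*} [TopologicalSpace X] [TopologicalSpace Y]
    (f : X → Y) (hf : Continuous f) (hopen : IsOpenMap f) (A : Set X)
    (hA : ∃ U : ℕ → Set X, StronglyCountableNhdBase A U) :
    ∃ W : ℕ → Set Y, StronglyCountableNhdBase (f '' A) W := by
  obtain ⟨U, hU1, hU2, hU3⟩ := hA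
  refine ⟨fun n => f '' U n, fun n => ⟨hopen _ (hU1 n).1, Set.image_mono (hU1 n).2⟩, ?_, ?_⟩
  · intro O hO hAO
    obtain ⟨n, hn⟩ := hU2 (f ⁻¹' O) (hO.preimage hf) (Set.image_subset_iff.mp hAO)
    exact ⟨n, Set.image_subset_iff.mpr hn⟩
  · intro u hu
    choose x hx hfx using hu
    obtain ⟨φ, hφ, p, hp⟩ := hU3 x hx
    refine ⟨φ, hφ, f p, ?_⟩
    have h := (hf.tendsto p).comp hp
    have he : u ∘ φ = f ∘ x ∘ φ := by
      funext n; simp [Function.comp, hfx]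
    rw [he]; exact h
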